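/- Let n ≥ 4 be an integer with n ≡ 0 (mod 4) and n ≢ 0 (mod 8), m a positive integer, and C a code of length m over S = 𝔽₂ × 𝔽₂. Then: (1) Γ_C is integral if and only if C ⊆ C̄^⊥; (2) Γ_C is unimodular if and only if C is Hermitian self-dual; (3) Γ_C is even if and only if 2 divides wt_H(w) for every w ∈ C; (4) Γ_C is even unimodular if and only if C is Type IV. -/

import Mathlib

open Finset

/-- The ring `𝔽₂ × 𝔽₂`. -/
abbrev S22 : Type := ZMod 2 × ZMod 2

/-- The bilinear form of `m` copies of the dual `D_n` root lattice (`n` even),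
written in the dual basis: `B(x,y) = Σ_i Σ_j Σ_s (1/4)(n − 2|j−s|) x_{ij} y_{is}`. -/
noncomputable def BDev (n m : ℕ) (x y : Fin m → Fin n → ℚ) : ℚ :=
  ∑ i, ∑ j : Fin n, ∑ s : Fin n,
    (1 / 4) * ((n : ℚ) - 2 * |((j : ℕ) : ℚ) - ((s : ℕ) : ℚ)|) * x i j * y i s

/-- `a_i(x)`: the sum of the odd-numbered (`1`-indexed) coordinates, mod 2. -/
def aD (n m : ℕ) (x : Fin m → Fin n → ℤ) (i : Fin m) : ZMod 2 :=
  ((∑ j ∈ Finset.univ.filter (fun j : Fin n => (j : ℕ) % 2 = 0), x i j : ℤ) : ZMod 2)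

/-- `b_i(x)`: the sum of the even-numbered (`1`-indexed) coordinates, mod 2. -/
def bD (n m : ℕ) (x : Fin m → Fin n → ℤ) (i : Fin m) : ZMod 2 :=
  ((∑ j ∈ Finset.univ.filter (fun j : Fin n => (j : ℕ) % 2 = 1), x i j : ℤ) : ZMod 2)

/-- The reduction map `ρ` to `(𝔽₂ × 𝔽₂)^m`, `ρ(x)_i = (a_i, b_i)`. -/
def rhoS (n m : ℕ) (x : Fin m → Fin n → ℤ) : Fin m → S22 :=
  fun i => (aD n m x i, bD n m x i)

/-- Coordinatewise conjugation `(a,b)‾ = (b,a)` on `(𝔽₂ × 𝔽₂)^m`. -/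
def conjS (m : ℕ) (w : Fin m → S22) : Fin m → S22 :=
  fun i => ((w i).2, (w i).1)

/-- `N₀`: the number of coordinates equal to `(0,0)`. -/
def N0S (m : ℕ) (w : Fin m → S22) : ℕ :=
  (Finset.univ.filter (fun i => w i = (0, 0))).card

/-- `N₂`: the number of coordinates equal to `(1,1)`. -/
def N2S (m : ℕ) (w : Fin m → S22) : ℕ :=
  (Finset.univ.filter (fun i => w i = (1, 1))).card

/-- `N₁ = m − N₀ − N₂`. -/
def N1S (m : ℕ) (w : Fin m → S22) : ℕ :=
  m - N0S m w - N2S m w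

/-- The Hamming weight `wt_H = N₁ + N₂`. -/
def wtHS (m : ℕ) (w : Fin m → S22) : ℕ :=
  N1S m w + N2S m w

/-- The dual code of a set of codewords over `𝔽₂ × 𝔽₂`. -/
def dualCodeS (m : ℕ) (C : Set (Fin m → S22)) : Set (Fin m → S22) :=
  {w | ∀ v ∈ C, ∑ i, w i * v i = 0}

/-- The lattice `Γ_C` constructed from the code `C`. -/
def GammaS (n m : ℕ) (C : Set (Fin m → S22)) : Set (Fin m → Fin n → ℤ) :=
  {x | rhoS n m x ∈ C}

/-- Coercion of an integral vector to a rational vector. -/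
def toQD (n m : ℕ) (x : Fin m → Fin n → ℤ) : Fin m → Fin n → ℚ :=
  fun i j => (x i j : ℚ)

/-- The dual lattice `Γ_C^*`, taken inside the `ℚ`-valued vectors. -/
noncomputable def dualLatticeS (n m : ℕ) (C : Set (Fin m → S22)) :
    Set (Fin m → Fin n → ℚ) :=
  {z | ∀ y ∈ GammaS n m C, ∃ k : ℤ, (k : ℚ) = BDev n m z (toQD n m y)}

/-- `Γ_C` is integral. -/
def IsIntegralS (n m : ℕ) (C : Set (Fin m → S22)) : Prop :=
  ∀ x ∈ GammaS n m C, ∀ y ∈ GammaS n m C,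
    ∃ k : ℤ, (k : ℚ) = BDev n m (toQD n m x) (toQD n m y)

/-- `Γ_C` is even. -/
def IsEvenLatS (n m : ℕ) (C : Set (Fin m → S22)) : Prop :=
  IsIntegralS n m C ∧ ∀ x ∈ GammaS n m C,
    ∃ k : ℤ, ((2 * k : ℤ) : ℚ) = BDev n m (toQD n m x) (toQD n m x)

/-- `Γ_C` is unimodular. -/
def IsUnimodularS (n m : ℕ) (C : Set (Fin m → S22)) : Prop :=
  dualLatticeS n m C = toQD n m '' GammaS n m C

/-- A code over `𝔽₂ × 𝔽₂` is Hermitian self-dual if `C = C̄^⊥`. -/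
def IsHermitianSelfDualS (m : ℕ) (C : Set (Fin m → S22)) : Prop :=
  C = dualCodeS m (conjS m '' C)

/-- A code over `𝔽₂ × 𝔽₂` is Type IV if it is Hermitian self-dual and all
Hamming weights are even. -/
def IsTypeIVS (m : ℕ) (C : Set (Fin m → S22)) : Prop :=
  IsHermitianSelfDualS m C ∧ ∀ w ∈ C, 2 ∣ wtHS m w


/-- integrality of a rational -/
def Iq (q : ℚ) : Prop := ∃ k : ℤ, (k:ℚ) = q

lemma Iq_int (k : ℤ) : Iq (k:ℚ) := ⟨k, rfl⟩

lemma Iq_add {a b : ℚ} (ha : Iq a) (hb : Iq b) : Iq (a + b) := by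
  obtain ⟨k, hk⟩ := ha; obtain ⟨l, hl⟩ := hb; exact ⟨k + l, by push_cast [← hk, ← hl]; ring⟩

lemma Iq_sub {a b : ℚ} (ha : Iq a) (hb : Iq b) : Iq (a - b) := by
  obtain ⟨k, hk⟩ := ha; obtain ⟨l, hl⟩ := hb; exact ⟨k - l, by push_cast [← hk, ← hl]; ring⟩

lemma Iq_zmul {a : ℚ} (c : ℤ) (ha : Iq a) : Iq ((c:ℚ) * a) := by
  obtain ⟨k, hk⟩ := ha; exact ⟨c * k, by push_cast [← hk]; ring⟩

lemma Iq_sum {α : Type*} {s : Finset α} {f : α → ℚ} (h : ∀ i ∈ s, Iq (f i)) :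
    Iq (∑ i ∈ s, f i) := by
  classical
  induction s using Finset.cons_induction with
  | empty => exact ⟨0, by simp⟩
  | cons a s' hx ih =>
      rw [Finset.sum_cons]
      exact Iq_add (h a (Finset.mem_cons_self a s')) (ih fun i hi => h i (Finset.mem_cons_of_mem hi))

/-- the integer matrix 4B -/
def MD (n m : ℕ) (x y : Fin m → Fin n → ℤ) : ℤ :=
  ∑ i, ∑ j : Fin n, ∑ s : Fin n, ((n:ℤ) - 2 * |(j:ℤ) - (s:ℤ)|) * x i j * y i s

lemma MD_cast (n m : ℕ) (x y : Fin m → Fin n → ℤ) :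
    ((MD n m x y : ℤ) : ℚ) = 4 * BDev n m (toQD n m x) (toQD n m y) := by
  rw [MD, BDev]
  push_cast [Int.cast_abs]
  rw [Finset.mul_sum]
  refine Finset.sum_congr rfl fun i _ => ?_
  rw [Finset.mul_sum]
  refine Finset.sum_congr rfl fun j _ => ?_
  rw [Finset.mul_sum]
  refine Finset.sum_congr rfl fun s _ => ?_
  rw [toQD, toQD]
  ring

def sigD (n m : ℕ) (x : Fin m → Fin n → ℤ) (i : Fin m) : ℤ := ∑ j, x i j
def tauD (n m : ℕ) (x : Fin m → Fin n → ℤ) (i : Fin m) : ℤ := ∑ j : Fin n, (j:ℤ) * x i j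
def PD (n m : ℕ) (x y : Fin m → Fin n → ℤ) : ℤ :=
  ∑ i, ∑ j : Fin n, ∑ s : Fin n, (min (j:ℤ) (s:ℤ)) * x i j * y i s

lemma abs_eq_min (a b : ℤ) : |a - b| = a + b - 2 * min a b := by
  rcases le_total a b with h | h
  · rw [abs_sub_comm, abs_of_nonneg (by omega), min_eq_left h]; ring
  · rw [abs_of_nonneg (by omega), min_eq_right h]; ring

lemma MD_eq (n m : ℕ) (x y : Fin m → Fin n → ℤ) :
    MD n m x y = (n:ℤ) * (∑ i, sigD n m x i * sigD n m y i)
      - 2 * (∑ i, (tauD n m x i * sigD n m y i + sigD n m x i * tauD n m y i))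
      + 4 * PD n m x y := by
  rw [MD, PD]
  have h1 : ∀ i, ∀ j s : Fin n, ((n:ℤ) - 2 * |(j:ℤ) - (s:ℤ)|) * x i j * y i s
      = (n:ℤ) * (x i j * y i s) - 2 * ((j:ℤ) * x i j * y i s + x i j * ((s:ℤ) * y i s))
        + 4 * (min (j:ℤ) (s:ℤ) * x i j * y i s) := by
    intro i j s; rw [abs_eq_min]; ring
  simp only [h1, Finset.sum_add_distrib, Finset.sum_sub_distrib, ← Finset.mul_sum,
    ← Finset.sum_mul, sigD, tauD]

lemma sum_sym_char2 {N : ℕ} (g : Fin N → Fin N → ZMod 2) (hg : ∀ j s, g j s = g s j) :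
    (∑ j, ∑ s, g j s) = ∑ j, g j j := by
  classical
  rw [← Finset.sum_product' (f := fun j s => g j s)]
  rw [← Finset.sum_filter_add_sum_filter_not (Finset.univ ×ˢ Finset.univ)
    (fun p : Fin N × Fin N => p.1 = p.2)]
  have h2 : ∑ p ∈ Finset.filter (fun p : Fin N × Fin N => ¬ p.1 = p.2)
      (Finset.univ ×ˢ Finset.univ), g p.1 p.2 = 0 := by
    refine Finset.sum_involution (fun p _ => Prod.swap p) (fun p hp => ?_) (fun p hp hf => ?_)
      (fun p hp => ?_) (fun p hp => ?_)
    · show g p.1 p.2 + g p.2 p.1 = 0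
      rw [hg p.2 p.1]
      exact CharTwo.add_self_eq_zero _
    · simp only [Finset.mem_filter] at hp
      intro h
      exact (hp.2 (congrArg Prod.fst h).symm).elim
    · simp only [Finset.mem_filter, Finset.mem_product, Finset.mem_univ, true_and] at hp ⊢
      exact fun h => hp h.symm
    · rfl
  rw [h2, add_zero]
  refine Finset.sum_nbij' (i := fun p => p.1) (j := fun j => (j, j)) ?_ ?_ ?_ ?_ ?_
  · intro p hp
    exact Finset.mem_univ _
  · intro j hj
    simp
  · intro p hp
    simp only [Finset.mem_filter] at hp
    exact Prod.ext rfl hp.2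
  · intro j hj
    rfl
  · intro p hp
    simp only [Finset.mem_filter] at hp
    exact congrArg (g p.1) hp.2.symm

lemma natCast_zmod2_one {k : ℕ} (hk : k % 2 = 1) : ((k : ℕ) : ZMod 2) = 1 := by
  rw [← Nat.mod_add_div k 2, hk]
  push_cast
  rw [show (2 : ZMod 2) = 0 by decide]
  ring

lemma natCast_zmod2_zero {k : ℕ} (hk : k % 2 = 0) : ((k : ℕ) : ZMod 2) = 0 := by
  rw [← Nat.mod_add_div k 2, hk]
  push_cast
  rw [show (2 : ZMod 2) = 0 by decide]
  ring

lemma sig_mod2 (n m : ℕ) (x : Fin m → Fin n → ℤ) (i : Fin m) :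
    ((sigD n m x i : ℤ) : ZMod 2) = aD n m x i + bD n m x i := by
  rw [sigD, aD, bD, ← Int.cast_add, ← Finset.sum_filter_add_sum_filter_not Finset.univ
    (fun j : Fin n => (j : ℕ) % 2 = 0)]
  congr 2
  refine Finset.sum_congr ?_ fun _ _ => rfl
  apply Finset.filter_congr
  intro j _
  omega

lemma tau_mod2 (n m : ℕ) (x : Fin m → Fin n → ℤ) (i : Fin m) :
    ((tauD n m x i : ℤ) : ZMod 2) = bD n m x i := by
  rw [tauD, bD]
  push_cast
  rw [← Finset.sum_filter_add_sum_filter_not Finset.univ (fun j : Fin n => (j : ℕ) % 2 = 1)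
    (fun j : Fin n => (((j:ℕ) : ZMod 2)) * ((x i j : ℤ) : ZMod 2))]
  have hA : ∑ j ∈ Finset.univ.filter (fun j : Fin n => (j : ℕ) % 2 = 1),
      (((j:ℕ) : ZMod 2)) * ((x i j : ℤ) : ZMod 2)
      = ∑ j ∈ Finset.univ.filter (fun j : Fin n => (j : ℕ) % 2 = 1), ((x i j : ℤ) : ZMod 2) :=
    Finset.sum_congr rfl fun j hj => by
      rw [natCast_zmod2_one (Finset.mem_filter.mp hj).2, one_mul]
  have hB : ∑ j ∈ Finset.univ.filter (fun j : Fin n => ¬ ((j : ℕ) % 2 = 1)),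
      (((j:ℕ) : ZMod 2)) * ((x i j : ℤ) : ZMod 2) = 0 :=
    Finset.sum_eq_zero fun j hj => by
      rw [natCast_zmod2_zero (by have := (Finset.mem_filter.mp hj).2; omega), zero_mul]
  rw [hA, hB, add_zero]

lemma PD_diag_mod2 (n m : ℕ) (x : Fin m → Fin n → ℤ) :
    ((PD n m x x : ℤ) : ZMod 2) = ∑ i, bD n m x i := by
  rw [PD]
  push_cast
  refine Finset.sum_congr rfl fun i _ => ?_
  rw [sum_sym_char2 (fun j s => ((min (j:ℤ) (s:ℤ) : ℤ) : ZMod 2) * ((x i j : ℤ) : ZMod 2)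
      * ((x i s : ℤ) : ZMod 2))
    (fun j s => by rw [min_comm]; ring)]
  have hsq : ∀ a : ZMod 2, a * a = a := by decide
  rw [← tau_mod2 n m x i, tauD]
  push_cast
  refine Finset.sum_congr rfl fun j _ => ?_
  rw [min_self, mul_assoc, hsq]
  norm_cast

def bsumS (m : ℕ) (w v : Fin m → S22) : ZMod 2 :=
  ∑ i, ((w i).1 * (v i).2 + (w i).2 * (v i).1)

def qsumS (m : ℕ) (w : Fin m → S22) : ZMod 2 :=
  ∑ i, ((w i).1 + (w i).2 + (w i).1 * (w i).2)

lemma four_dvd_MD_iff (n m : ℕ) (hn4 : 4 ∣ n) (x y : Fin m → Fin n → ℤ) :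
    4 ∣ MD n m x y ↔ bsumS m (rhoS n m x) (rhoS n m y) = 0 := by
  obtain ⟨t, ht⟩ := hn4
  have hMD := MD_eq n m x y
  set A := ∑ i, (tauD n m x i * sigD n m y i + sigD n m x i * tauD n m y i) with hA
  have hnt : (n:ℤ) * (∑ i, sigD n m x i * sigD n m y i)
      = 4 * ((t:ℤ) * (∑ i, sigD n m x i * sigD n m y i)) := by
    have : (n:ℤ) = 4 * t := by rw [ht]; push_cast; ring
    rw [this]; ring
  have h1 : 4 ∣ MD n m x y ↔ 2 ∣ A := by
    rw [hMD, hnt]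
    constructor
    · intro ⟨k, hk⟩; omega
    · intro ⟨k, hk⟩; omega
  have hdvd : (2:ℤ) ∣ A ↔ ((A : ℤ) : ZMod 2) = 0 := by
    rw [ZMod.intCast_zmod_eq_zero_iff_dvd]; norm_num
  rw [h1, hdvd]
  rw [hA, Int.cast_sum]
  have h2 : ∀ i, (((tauD n m x i * sigD n m y i + sigD n m x i * tauD n m y i : ℤ)) : ZMod 2)
      = (rhoS n m x i).1 * (rhoS n m y i).2 + (rhoS n m x i).2 * (rhoS n m y i).1 := by
    intro i
    push_cast
    rw [tau_mod2, sig_mod2, tau_mod2, sig_mod2]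
    show _ = (aD n m x i) * (bD n m y i) + (bD n m x i) * (aD n m y i)
    generalize aD n m x i = a; generalize bD n m x i = b
    generalize aD n m y i = a'; generalize bD n m y i = b'
    revert a b a' b'
    decide
  rw [Finset.sum_congr rfl fun i _ => h2 i]
  rfl

lemma eight_dvd_MD_iff (n m : ℕ) (hn : n % 8 = 4) (x : Fin m → Fin n → ℤ) :
    8 ∣ MD n m x x ↔ qsumS m (rhoS n m x) = 0 := by
  have hMD := MD_eq n m x x
  have hr : ∃ r, n = 8 * r + 4 := ⟨n / 8, by omega⟩
  obtain ⟨r, hrn⟩ := hr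
  set T := (∑ i, sigD n m x i * sigD n m x i) - (∑ i, sigD n m x i * tauD n m x i) + PD n m x x with hT
  have h1 : 8 ∣ MD n m x x ↔ 2 ∣ T := by
    have hn' : (n:ℤ) * (∑ i, sigD n m x i * sigD n m x i)
        = 8 * ((r:ℤ) * (∑ i, sigD n m x i * sigD n m x i))
          + 4 * (∑ i, sigD n m x i * sigD n m x i) := by
      have : (n:ℤ) = 8 * r + 4 := by rw [hrn]; push_cast; ring
      rw [this]; ring
    have e : ∑ i, (tauD n m x i * sigD n m x i + sigD n m x i * tauD n m x i)
        = 2 * ∑ i, sigD n m x i * tauD n m x i := by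
      rw [Finset.mul_sum]; exact Finset.sum_congr rfl fun i _ => by ring
    rw [e, hn'] at hMD
    rw [hMD, hT]
    constructor
    · intro ⟨k, hk⟩; omega
    · intro ⟨k, hk⟩; omega
  have hdvd : (2:ℤ) ∣ T ↔ ((T : ℤ) : ZMod 2) = 0 := by
    rw [ZMod.intCast_zmod_eq_zero_iff_dvd]; norm_num
  rw [h1, hdvd, hT]
  push_cast
  rw [PD_diag_mod2, ← Finset.sum_sub_distrib, ← Finset.sum_add_distrib]
  have h2 : ∀ i, (((sigD n m x i:ℤ)) : ZMod 2) * (((sigD n m x i:ℤ)) : ZMod 2)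
      - (((sigD n m x i:ℤ)) : ZMod 2) * (((tauD n m x i:ℤ)) : ZMod 2) + bD n m x i
      = (rhoS n m x i).1 + (rhoS n m x i).2 + (rhoS n m x i).1 * (rhoS n m x i).2 := by
    intro i
    rw [tau_mod2, sig_mod2]
    show _ = (aD n m x i) + (bD n m x i) + (aD n m x i) * (bD n m x i)
    generalize aD n m x i = a; generalize bD n m x i = b
    revert a b
    decide
  rw [Finset.sum_congr rfl fun i _ => h2 i]
  rfl

lemma Iq_BDev_iff (n m : ℕ) (hn4 : 4 ∣ n) (x y : Fin m → Fin n → ℤ) :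
    Iq (BDev n m (toQD n m x) (toQD n m y)) ↔ bsumS m (rhoS n m x) (rhoS n m y) = 0 := by
  rw [← four_dvd_MD_iff n m hn4 x y]
  have hc := MD_cast n m x y
  constructor
  · intro ⟨k, hk⟩
    refine ⟨k, ?_⟩
    have : ((MD n m x y : ℤ) : ℚ) = ((4 * k : ℤ) : ℚ) := by rw [hc, ← hk]; push_cast; ring
    exact_mod_cast this
  · intro ⟨k, hk⟩
    refine ⟨k, ?_⟩
    have h4 : ((MD n m x y : ℤ) : ℚ) = ((4 * k : ℤ) : ℚ) := by rw [hk]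
    rw [hc] at h4
    push_cast at h4 ⊢
    linarith

lemma even_BDev_iff (n m : ℕ) (hn : n % 8 = 4) (x : Fin m → Fin n → ℤ) :
    (∃ k : ℤ, ((2 * k : ℤ) : ℚ) = BDev n m (toQD n m x) (toQD n m x))
      ↔ qsumS m (rhoS n m x) = 0 := by
  rw [← eight_dvd_MD_iff n m hn x]
  have hc := MD_cast n m x x
  constructor
  · intro ⟨k, hk⟩
    refine ⟨k, ?_⟩
    have : ((MD n m x x : ℤ) : ℚ) = ((8 * k : ℤ) : ℚ) := by
      rw [hc, ← hk]; push_cast; ring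
    exact_mod_cast this
  · intro ⟨k, hk⟩
    refine ⟨k, ?_⟩
    have h4 : ((MD n m x x : ℤ) : ℚ) = ((8 * k : ℤ) : ℚ) := by rw [hk]
    rw [hc] at h4
    push_cast at h4 ⊢
    linarith

lemma rho_surj (n m : ℕ) (hn : 2 ≤ n) (w : Fin m → S22) :
    ∃ x : Fin m → Fin n → ℤ, rhoS n m x = w := by
  refine ⟨fun i j => if (j:ℕ) = 0 then ((w i).1.val : ℤ) else if (j:ℕ) = 1 then ((w i).2.val : ℤ) else 0, ?_⟩
  funext i
  have h0 : (0:ℕ) < n := by omega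
  have h1 : (1:ℕ) < n := by omega
  rw [rhoS]
  have ha : aD n m (fun i j => if (j:ℕ) = 0 then ((w i).1.val : ℤ) else if (j:ℕ) = 1 then ((w i).2.val : ℤ) else 0) i = (w i).1 := by
    rw [aD]
    rw [Finset.sum_eq_single_of_mem (⟨0, h0⟩ : Fin n)
      (by simp)
      (fun j hj hne => by
        have hj2 := (Finset.mem_filter.mp hj).2
        have : (j:ℕ) ≠ 0 := fun h => hne (Fin.ext h)
        have : ¬ ((j:ℕ) = 1) := by omega
        simp_all)]
    simp only [if_pos rfl]
    push_cast
    exact ZMod.natCast_rightInverse (w i).1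
  have hb : bD n m (fun i j => if (j:ℕ) = 0 then ((w i).1.val : ℤ) else if (j:ℕ) = 1 then ((w i).2.val : ℤ) else 0) i = (w i).2 := by
    rw [bD]
    rw [Finset.sum_eq_single_of_mem (⟨1, h1⟩ : Fin n)
      (by simp)
      (fun j hj hne => by
        have hj2 := (Finset.mem_filter.mp hj).2
        have : (j:ℕ) ≠ 1 := fun h => hne (Fin.ext h)
        have : ¬ ((j:ℕ) = 0) := by omega
        simp_all)]
    have hne0 : ¬ (((⟨1, h1⟩ : Fin n) : ℕ) = 0) := by simp
    rw [if_neg hne0, if_pos rfl]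
    push_cast
    exact ZMod.natCast_rightInverse (w i).2
  rw [ha, hb]

lemma qsum_wt (m : ℕ) (w : Fin m → S22) : (qsumS m w = 0 ↔ 2 ∣ wtHS m w) := by
  have hq : ∀ v : S22, v.1 + v.2 + v.1 * v.2 = if v = (0,0) then 0 else 1 := by decide
  have h1 : qsumS m w = ((Finset.univ.filter (fun i => ¬ (w i = (0,0)))).card : ZMod 2) := by
    rw [qsumS, Finset.sum_congr rfl fun i _ => hq (w i)]
    rw [Finset.sum_ite, Finset.sum_const_zero, Finset.sum_const, zero_add]
    simp
  have hcard : (Finset.univ.filter (fun i => ¬ (w i = (0,0)))).card = wtHS m w := by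
    have h0 : N0S m w + (Finset.univ.filter (fun i => ¬ (w i = (0,0)))).card = m := by
      rw [N0S, Finset.card_filter_add_card_filter_not]
      simp
    have h2 : N2S m w ≤ (Finset.univ.filter (fun i => ¬ (w i = (0,0)))).card := by
      apply Finset.card_le_card
      apply Finset.monotone_filter_right
      intro i _ hi
      rw [hi]
      decide
    rw [wtHS, N1S]
    omega
  rw [h1, hcard, ZMod.natCast_eq_zero_iff]

lemma mem_dual_iff_bsum (m : ℕ) (C : Submodule S22 (Fin m → S22)) (w : Fin m → S22) :
    w ∈ dualCodeS m (conjS m '' (C : Set _)) ↔ ∀ v ∈ C, bsumS m w v = 0 := by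
  have hsplit : ∀ v : Fin m → S22, (∑ i, w i * conjS m v i = 0)
      ↔ ((∑ i, (w i).1 * (v i).2 = 0) ∧ (∑ i, (w i).2 * (v i).1 = 0)) := by
    intro v
    rw [Prod.ext_iff, Prod.fst_sum, Prod.snd_sum, Prod.fst_zero, Prod.snd_zero]
    exact Iff.rfl
  constructor
  · intro hw v hv
    have := hw (conjS m v) ⟨v, hv, rfl⟩
    obtain ⟨h1, h2⟩ := (hsplit v).mp this
    rw [bsumS, Finset.sum_add_distrib, h1, h2, add_zero]
  · intro hb
    intro v' hv'
    obtain ⟨v, hv, rfl⟩ := hv'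
    refine (hsplit v).mpr ⟨?_, ?_⟩
    · have h01 := hb (((0,1) : S22) • v) (Submodule.smul_mem C _ hv)
      rw [bsumS] at h01
      rw [← h01]
      refine Finset.sum_congr rfl fun i _ => ?_
      show (w i).1 * (v i).2 = (w i).1 * (((0,1) : S22) * v i).2 + (w i).2 * (((0,1) : S22) * v i).1
      rcases w i with ⟨wa, wb⟩; rcases v i with ⟨va, vb⟩
      show wa * vb = wa * (1 * vb) + wb * (0 * va)
      ring
    · have h10 := hb (((1,0) : S22) • v) (Submodule.smul_mem C _ hv)
      rw [bsumS] at h10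
      rw [← h10]
      refine Finset.sum_congr rfl fun i _ => ?_
      rcases hwi : w i with ⟨wa, wb⟩; rcases hvi : v i with ⟨va, vb⟩
      show wb * va = wa * (((1,0) : S22) * v i).2 + wb * (((1,0) : S22) * v i).1
      rw [hvi]
      show wb * va = wa * (0 * vb) + wb * (1 * va)
      ring

lemma bsum_qsum (m : ℕ) (w v : Fin m → S22) :
    bsumS m w v = qsumS m (w + v) + qsumS m w + qsumS m v := by
  rw [bsumS, qsumS, qsumS, qsumS, ← Finset.sum_add_distrib, ← Finset.sum_add_distrib]
  refine Finset.sum_congr rfl fun i _ => ?_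
  show (w i).1 * (v i).2 + (w i).2 * (v i).1
      = ((w i + v i).1 + (w i + v i).2 + (w i + v i).1 * (w i + v i).2) + _ + _
  rcases w i with ⟨wa, wb⟩; rcases v i with ⟨va, vb⟩
  show wa * vb + wb * va = ((wa + va) + (wb + vb) + (wa + va) * (wb + vb))
      + (wa + wb + wa * wb) + (va + vb + va * vb)
  revert wa wb va vb
  decide

/-- test vectors supported in one block -/
def tvD (n m : ℕ) (i₀ : Fin m) (c : Fin n → ℤ) : Fin m → Fin n → ℤ :=
  fun i j => if i = i₀ then c j else 0

noncomputable def KD (n m : ℕ) (z : Fin m → Fin n → ℚ) (i₀ : Fin m) (s : Fin n) : ℚ :=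
  ∑ j : Fin n, (1 / 4) * ((n : ℚ) - 2 * |((j : ℕ) : ℚ) - ((s : ℕ) : ℚ)|) * z i₀ j

lemma BDev_tv (n m : ℕ) (z : Fin m → Fin n → ℚ) (i₀ : Fin m) (c : Fin n → ℤ) :
    BDev n m z (toQD n m (tvD n m i₀ c)) = ∑ s : Fin n, KD n m z i₀ s * ((c s : ℤ) : ℚ) := by
  rw [BDev]
  rw [Finset.sum_eq_single_of_mem i₀ (Finset.mem_univ _) (fun i _ hne => ?_)]
  · rw [Finset.sum_comm]
    refine Finset.sum_congr rfl fun s _ => ?_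
    rw [KD, Finset.sum_mul]
    refine Finset.sum_congr rfl fun j _ => ?_
    show _ * (toQD n m (tvD n m i₀ c) i₀ s) = _
    rw [toQD, tvD]
    simp only [eq_self_iff_true, if_true]
  · refine Finset.sum_eq_zero fun j _ => Finset.sum_eq_zero fun s _ => ?_
    show _ * (toQD n m (tvD n m i₀ c) i s) = 0
    rw [toQD, tvD]
    simp only [if_neg hne]
    norm_num

lemma rho_tv (n m : ℕ) (i₀ : Fin m) (c : Fin n → ℤ)
    (hce : ((∑ j ∈ Finset.univ.filter (fun j : Fin n => (j : ℕ) % 2 = 0), c j : ℤ) : ZMod 2) = 0)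
    (hco : ((∑ j ∈ Finset.univ.filter (fun j : Fin n => (j : ℕ) % 2 = 1), c j : ℤ) : ZMod 2) = 0) :
    rhoS n m (tvD n m i₀ c) = 0 := by
  funext i
  rw [rhoS, aD, bD]
  simp only [tvD]
  by_cases hi : i = i₀
  · subst hi
    simp only [if_pos rfl]
    rw [show ((0 : Fin m → S22) i) = (0, 0) from rfl]
    rw [Prod.mk.injEq]
    exact ⟨hce, hco⟩
  · simp only [if_neg hi]
    rw [Finset.sum_const_zero, Finset.sum_const_zero]
    rfl

lemma filter_ind_sum {n : ℕ} (P : Fin n → Prop) [DecidablePred P] (t : ℕ) (ht : t < n) (a : ℤ) :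
    ∑ j ∈ Finset.univ.filter P, (if (j : ℕ) = t then a else 0)
      = if P ⟨t, ht⟩ then a else 0 := by
  have h1 : ∀ j : Fin n, (if (j : ℕ) = t then a else 0) = (if j = ⟨t, ht⟩ then a else 0) := by
    intro j
    refine if_congr ?_ rfl rfl
    rw [Fin.ext_iff]
  rw [Finset.sum_congr rfl fun j _ => h1 j]
  rw [Finset.sum_ite_eq' (Finset.univ.filter P) (⟨t, ht⟩ : Fin n) (fun _ => a)]
  simp

lemma qabs (a b : ℕ) : |((a:ℕ):ℚ) - ((b:ℕ):ℚ)| = ((|(a:ℤ) - (b:ℤ)| : ℤ) : ℚ) := by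
  rw [Int.cast_abs]
  push_cast
  rfl

def c3p (n : ℕ) (t₁ t₂ t₃ : ℕ) (a₁ a₂ a₃ : ℤ) : Fin n → ℤ :=
  fun j => (if (j:ℕ) = t₁ then a₁ else 0) + (if (j:ℕ) = t₂ then a₂ else 0)
    + (if (j:ℕ) = t₃ then a₃ else 0)

lemma c3p_filter (n : ℕ) (P : Fin n → Prop) [DecidablePred P] (t₁ t₂ t₃ : ℕ)
    (h1 : t₁ < n) (h2 : t₂ < n) (h3 : t₃ < n) (a₁ a₂ a₃ : ℤ) :
    ∑ j ∈ Finset.univ.filter P, c3p n t₁ t₂ t₃ a₁ a₂ a₃ j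
      = (if P ⟨t₁, h1⟩ then a₁ else 0) + (if P ⟨t₂, h2⟩ then a₂ else 0)
        + (if P ⟨t₃, h3⟩ then a₃ else 0) := by
  simp only [c3p]
  rw [Finset.sum_add_distrib, Finset.sum_add_distrib,
    filter_ind_sum P t₁ h1 a₁, filter_ind_sum P t₂ h2 a₂, filter_ind_sum P t₃ h3 a₃]

lemma c3p_eval (n m : ℕ) (z : Fin m → Fin n → ℚ) (i₀ : Fin m) (t₁ t₂ t₃ : ℕ)
    (h1 : t₁ < n) (h2 : t₂ < n) (h3 : t₃ < n) (a₁ a₂ a₃ : ℤ) :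
    ∑ s : Fin n, KD n m z i₀ s * ((c3p n t₁ t₂ t₃ a₁ a₂ a₃ s : ℤ) : ℚ)
      = (a₁:ℚ) * KD n m z i₀ ⟨t₁, h1⟩ + (a₂:ℚ) * KD n m z i₀ ⟨t₂, h2⟩
        + (a₃:ℚ) * KD n m z i₀ ⟨t₃, h3⟩ := by
  have hc : ∀ s : Fin n, ((c3p n t₁ t₂ t₃ a₁ a₂ a₃ s : ℤ) : ℚ)
      = (if s = (⟨t₁, h1⟩ : Fin n) then (a₁:ℚ) else 0) + (if s = (⟨t₂, h2⟩ : Fin n) then (a₂:ℚ) else 0)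
        + (if s = (⟨t₃, h3⟩ : Fin n) then (a₃:ℚ) else 0) := by
    intro s
    rw [c3p]
    push_cast [apply_ite (fun r : ℤ => (r : ℚ))]
    simp only [Fin.ext_iff]
  rw [Finset.sum_congr rfl fun s _ => by rw [hc s, mul_add, mul_add]]
  rw [Finset.sum_add_distrib, Finset.sum_add_distrib]
  congr 1
  · congr 1
    · simp only [mul_ite, mul_zero]
      rw [Finset.sum_ite_eq' Finset.univ _ (fun s => KD n m z i₀ s * (a₁:ℚ))]
      simp [mul_comm]
    · simp only [mul_ite, mul_zero]
      rw [Finset.sum_ite_eq' Finset.univ _ (fun s => KD n m z i₀ s * (a₂:ℚ))]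
      simp [mul_comm]
  · simp only [mul_ite, mul_zero]
    rw [Finset.sum_ite_eq' Finset.univ _ (fun s => KD n m z i₀ s * (a₃:ℚ))]
    simp [mul_comm]

lemma K_comb (n m : ℕ) (z : Fin m → Fin n → ℚ) (i₀ : Fin m) (t₁ t₂ t₃ : ℕ)
    (h1 : t₁ < n) (h2 : t₂ < n) (h3 : t₃ < n) (a₁ a₂ a₃ : ℤ) :
    (a₁:ℚ) * KD n m z i₀ ⟨t₁, h1⟩ + (a₂:ℚ) * KD n m z i₀ ⟨t₂, h2⟩ + (a₃:ℚ) * KD n m z i₀ ⟨t₃, h3⟩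
      = ∑ j : Fin n, ((a₁:ℚ) * ((1:ℚ)/4 * ((n:ℚ) - 2*((|((j:ℕ):ℤ) - ((t₁:ℕ):ℤ)| : ℤ):ℚ)))
          + (a₂:ℚ) * ((1:ℚ)/4 * ((n:ℚ) - 2*((|((j:ℕ):ℤ) - ((t₂:ℕ):ℤ)| : ℤ):ℚ)))
          + (a₃:ℚ) * ((1:ℚ)/4 * ((n:ℚ) - 2*((|((j:ℕ):ℤ) - ((t₃:ℕ):ℤ)| : ℤ):ℚ)))) * z i₀ j := by
  rw [KD, KD, KD, Finset.mul_sum, Finset.mul_sum, Finset.mul_sum, ← Finset.sum_add_distrib,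
    ← Finset.sum_add_distrib]
  refine Finset.sum_congr rfl fun j _ => ?_
  simp only [Fin.val_mk]
  rw [qabs (j:ℕ) t₁, qabs (j:ℕ) t₂, qabs (j:ℕ) t₃]
  ring

lemma tv_extract (n m : ℕ) (Cs : Set (Fin m → S22)) (h0 : (0 : Fin m → S22) ∈ Cs)
    (z : Fin m → Fin n → ℚ) (hz : z ∈ dualLatticeS n m Cs) (i₀ : Fin m) (t₁ t₂ t₃ : ℕ)
    (h1 : t₁ < n) (h2 : t₂ < n) (h3 : t₃ < n) (a₁ a₂ a₃ : ℤ)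
    (hpe : ((a₁ * (if t₁ % 2 = 0 then 1 else 0) + a₂ * (if t₂ % 2 = 0 then 1 else 0)
        + a₃ * (if t₃ % 2 = 0 then 1 else 0) : ℤ) : ZMod 2) = 0)
    (hpo : ((a₁ * (if t₁ % 2 = 1 then 1 else 0) + a₂ * (if t₂ % 2 = 1 then 1 else 0)
        + a₃ * (if t₃ % 2 = 1 then 1 else 0) : ℤ) : ZMod 2) = 0) :
    Iq (∑ j : Fin n, ((a₁:ℚ) * ((1:ℚ)/4 * ((n:ℚ) - 2*((|((j:ℕ):ℤ) - ((t₁:ℕ):ℤ)| : ℤ):ℚ)))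
          + (a₂:ℚ) * ((1:ℚ)/4 * ((n:ℚ) - 2*((|((j:ℕ):ℤ) - ((t₂:ℕ):ℤ)| : ℤ):ℚ)))
          + (a₃:ℚ) * ((1:ℚ)/4 * ((n:ℚ) - 2*((|((j:ℕ):ℤ) - ((t₃:ℕ):ℤ)| : ℤ):ℚ)))) * z i₀ j) := by
  set c := c3p n t₁ t₂ t₃ a₁ a₂ a₃ with hcdef
  have hmem : tvD n m i₀ c ∈ GammaS n m Cs := by
    show rhoS n m (tvD n m i₀ c) ∈ Cs
    rw [rho_tv n m i₀ c ?_ ?_]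
    · exact h0
    · rw [hcdef, c3p_filter n _ t₁ t₂ t₃ h1 h2 h3 a₁ a₂ a₃]
      convert hpe using 2
      simp only [Fin.val_mk, mul_ite, mul_one, mul_zero]
    · rw [hcdef, c3p_filter n _ t₁ t₂ t₃ h1 h2 h3 a₁ a₂ a₃]
      convert hpo using 2
      simp only [Fin.val_mk, mul_ite, mul_one, mul_zero]
  have hval := hz (tvD n m i₀ c) hmem
  obtain ⟨k, hk⟩ := hval
  rw [BDev_tv, hcdef, c3p_eval n m z i₀ t₁ t₂ t₃ h1 h2 h3 a₁ a₂ a₃,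
    K_comb n m z i₀ t₁ t₂ t₃ h1 h2 h3 a₁ a₂ a₃] at hk
  exact ⟨k, hk⟩

lemma interior_Iq (n m : ℕ) (Cs : Set (Fin m → S22)) (h0 : (0 : Fin m → S22) ∈ Cs)
    (z : Fin m → Fin n → ℚ) (hz : z ∈ dualLatticeS n m Cs) (i₀ : Fin m) (j : Fin n)
    (hj0 : (j:ℕ) ≠ 0) (hjl : (j:ℕ) ≠ n - 1) : Iq (z i₀ j) := by
  have hn1 : (j:ℕ) < n := j.isLt
  set s₀ := (j:ℕ) - 1 with hs₀
  have hs : s₀ + 2 < n := by omega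
  have hIq := tv_extract n m Cs h0 z hz i₀ s₀ (s₀+1) (s₀+2) (by omega) (by omega) hs (-1) 2 (-1)
    (by rcases Nat.mod_two_eq_zero_or_one s₀ with h | h
        · have e1 : s₀ % 2 = 0 := by omega
          have e2 : (s₀+1) % 2 = 1 := by omega
          have e3 : (s₀+2) % 2 = 0 := by omega
          simp only [e1, e2, e3]
          decide
        · have e1 : s₀ % 2 = 1 := by omega
          have e2 : (s₀+1) % 2 = 0 := by omega
          have e3 : (s₀+2) % 2 = 1 := by omega
          simp only [e1, e2, e3]
          decide)
    (by rcases Nat.mod_two_eq_zero_or_one s₀ with h | h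
        · have e1 : s₀ % 2 = 0 := by omega
          have e2 : (s₀+1) % 2 = 1 := by omega
          have e3 : (s₀+2) % 2 = 0 := by omega
          simp only [e1, e2, e3]
          decide
        · have e1 : s₀ % 2 = 1 := by omega
          have e2 : (s₀+1) % 2 = 0 := by omega
          have e3 : (s₀+2) % 2 = 1 := by omega
          simp only [e1, e2, e3]
          decide)
  obtain ⟨k, hk⟩ := hIq
  refine ⟨k, hk.trans ?_⟩
  have hterm : ∀ jj : Fin n,
      (((-1:ℤ):ℚ) * ((1:ℚ)/4 * ((n:ℚ) - 2*((|((jj:ℕ):ℤ) - ((s₀:ℕ):ℤ)| : ℤ):ℚ)))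
        + ((2:ℤ):ℚ) * ((1:ℚ)/4 * ((n:ℚ) - 2*((|((jj:ℕ):ℤ) - (((s₀+1):ℕ):ℤ)| : ℤ):ℚ)))
        + ((-1:ℤ):ℚ) * ((1:ℚ)/4 * ((n:ℚ) - 2*((|((jj:ℕ):ℤ) - (((s₀+2):ℕ):ℤ)| : ℤ):ℚ)))) * z i₀ jj
      = if jj = j then z i₀ jj else 0 := by
    intro jj
    by_cases hjj : jj = j
    · rw [if_pos hjj]
      have e1 : |((jj:ℕ):ℤ) - ((s₀:ℕ):ℤ)| = 1 := by
        have hnn := abs_nonneg (((jj:ℕ):ℤ) - ((s₀:ℕ):ℤ))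
        rcases abs_choice (((jj:ℕ):ℤ) - ((s₀:ℕ):ℤ)) with h | h <;>
          (have hv : (jj:ℕ) = (j:ℕ) := by rw [hjj]
           omega)
      have e2 : |((jj:ℕ):ℤ) - (((s₀+1):ℕ):ℤ)| = 0 := by
        have hnn := abs_nonneg (((jj:ℕ):ℤ) - (((s₀+1):ℕ):ℤ))
        rcases abs_choice (((jj:ℕ):ℤ) - (((s₀+1):ℕ):ℤ)) with h | h <;>
          (have hv : (jj:ℕ) = (j:ℕ) := by rw [hjj]
           omega)
      have e3 : |((jj:ℕ):ℤ) - (((s₀+2):ℕ):ℤ)| = 1 := by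
        have hnn := abs_nonneg (((jj:ℕ):ℤ) - (((s₀+2):ℕ):ℤ))
        rcases abs_choice (((jj:ℕ):ℤ) - (((s₀+2):ℕ):ℤ)) with h | h <;>
          (have hv : (jj:ℕ) = (j:ℕ) := by rw [hjj]
           omega)
      rw [e1, e2, e3]
      push_cast
      ring
    · rw [if_neg hjj]
      have hne : (jj:ℕ) ≠ s₀ + 1 := by
        intro h
        exact hjj (Fin.ext (by omega))
      have key : |((jj:ℕ):ℤ) - ((s₀:ℕ):ℤ)| + |((jj:ℕ):ℤ) - (((s₀+2):ℕ):ℤ)|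
          = 2 * |((jj:ℕ):ℤ) - (((s₀+1):ℕ):ℤ)| := by
        rcases abs_choice (((jj:ℕ):ℤ) - ((s₀:ℕ):ℤ)) with h1 | h1 <;>
        rcases abs_choice (((jj:ℕ):ℤ) - (((s₀+1):ℕ):ℤ)) with h2 | h2 <;>
        rcases abs_choice (((jj:ℕ):ℤ) - (((s₀+2):ℕ):ℤ)) with h3 | h3 <;>
          (have k1 := abs_nonneg (((jj:ℕ):ℤ) - ((s₀:ℕ):ℤ))
           have k2 := abs_nonneg (((jj:ℕ):ℤ) - (((s₀+1):ℕ):ℤ))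
           have k3 := abs_nonneg (((jj:ℕ):ℤ) - (((s₀+2):ℕ):ℤ))
           omega)
      have keyq : ((|((jj:ℕ):ℤ) - ((s₀:ℕ):ℤ)| : ℤ) : ℚ) + ((|((jj:ℕ):ℤ) - (((s₀+2):ℕ):ℤ)| : ℤ) : ℚ)
          = 2 * ((|((jj:ℕ):ℤ) - (((s₀+1):ℕ):ℤ)| : ℤ) : ℚ) := by exact_mod_cast key
      have hcz : (((-1:ℤ):ℚ) * ((1:ℚ)/4 * ((n:ℚ) - 2*((|((jj:ℕ):ℤ) - ((s₀:ℕ):ℤ)| : ℤ):ℚ)))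
        + ((2:ℤ):ℚ) * ((1:ℚ)/4 * ((n:ℚ) - 2*((|((jj:ℕ):ℤ) - (((s₀+1):ℕ):ℤ)| : ℤ):ℚ)))
        + ((-1:ℤ):ℚ) * ((1:ℚ)/4 * ((n:ℚ) - 2*((|((jj:ℕ):ℤ) - (((s₀+2):ℕ):ℤ)| : ℤ):ℚ)))) = 0 := by
        push_cast at keyq ⊢
        linarith
      rw [hcz, zero_mul]
  rw [Finset.sum_congr rfl fun jj _ => hterm jj]
  rw [Finset.sum_ite_eq' Finset.univ j (fun jj => z i₀ jj)]
  simp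

lemma dual_Iq (n m : ℕ) (hn : 4 ≤ n) (hn4 : 4 ∣ n) (Cs : Set (Fin m → S22))
    (h0 : (0 : Fin m → S22) ∈ Cs) (z : Fin m → Fin n → ℚ) (hz : z ∈ dualLatticeS n m Cs)
    (i₀ : Fin m) (j : Fin n) : Iq (z i₀ j) := by
  have h0n : 0 < n := by omega
  have hLn : n - 1 < n := by omega
  set f0 : Fin n := ⟨0, h0n⟩ with hf0
  set L : Fin n := ⟨n - 1, hLn⟩ with hL
  have hf0L : f0 ≠ L := by
    intro h
    have := congrArg Fin.val h
    simp only [hf0, hL] at this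
    omega
  -- interior entries
  have hInt : ∀ jj : Fin n, (jj:ℕ) ≠ 0 → (jj:ℕ) ≠ n - 1 → Iq (z i₀ jj) :=
    fun jj h1 h2 => interior_Iq n m Cs h0 z hz i₀ jj h1 h2
  -- the set of interior indices
  set T : Finset (Fin n) := Finset.univ.filter (fun jj : Fin n => ¬(jj = f0 ∨ jj = L)) with hT
  have hTmem : ∀ jj ∈ T, (jj:ℕ) ≠ 0 ∧ (jj:ℕ) ≠ n - 1 := by
    intro jj hjj
    rw [hT, Finset.mem_filter] at hjj
    constructor
    · intro h
      exact hjj.2 (Or.inl (Fin.ext h))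
    · intro h
      exact hjj.2 (Or.inr (Fin.ext h))
  have hsplit : ∀ g : Fin n → ℚ, ∑ jj : Fin n, g jj = g f0 + g L + ∑ jj ∈ T, g jj := by
    intro g
    rw [← Finset.sum_filter_add_sum_filter_not Finset.univ (fun jj : Fin n => jj = f0 ∨ jj = L) g]
    congr 1
    have hfil : Finset.univ.filter (fun jj : Fin n => jj = f0 ∨ jj = L) = {f0, L} := by
      ext jj
      simp [Finset.mem_insert]
    rw [hfil, Finset.sum_pair hf0L]
  have hS : Iq (∑ jj ∈ T, z i₀ jj) :=
    Iq_sum fun jj hjj => hInt jj (hTmem jj hjj).1 (hTmem jj hjj).2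
  obtain ⟨q, hq⟩ := hn4
  have hcast : (n:ℚ) = 4 * (q : ℚ) := by
    exact_mod_cast congrArg (Nat.cast : ℕ → ℚ) (by omega : n = 4 * q)
  have h1n : (1:ℕ) < n := by omega
  -- first endpoint relation
  have H2 := tv_extract n m Cs h0 z hz i₀ 0 1 1 h0n h1n h1n 2 (-1) (-1) (by decide) (by decide)
  have hterm2 : ∀ jj : Fin n,
      (((2:ℤ):ℚ) * ((1:ℚ)/4 * ((n:ℚ) - 2*((|((jj:ℕ):ℤ) - (((0:ℕ)):ℤ)| : ℤ):ℚ)))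
        + ((-1:ℤ):ℚ) * ((1:ℚ)/4 * ((n:ℚ) - 2*((|((jj:ℕ):ℤ) - (((1:ℕ)):ℤ)| : ℤ):ℚ)))
        + ((-1:ℤ):ℚ) * ((1:ℚ)/4 * ((n:ℚ) - 2*((|((jj:ℕ):ℤ) - (((1:ℕ)):ℤ)| : ℤ):ℚ)))) * z i₀ jj
      = (if jj = f0 then (1:ℚ) else (-1)) * z i₀ jj := by
    intro jj
    by_cases hjj : jj = f0
    · rw [if_pos hjj]
      have hv : (jj:ℕ) = 0 := by rw [hjj]
      have e0 : |((jj:ℕ):ℤ) - (((0:ℕ)):ℤ)| = 0 := by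
        have hnn := abs_nonneg (((jj:ℕ):ℤ) - (((0:ℕ)):ℤ))
        rcases abs_choice (((jj:ℕ):ℤ) - (((0:ℕ)):ℤ)) with h | h <;> omega
      have e1 : |((jj:ℕ):ℤ) - (((1:ℕ)):ℤ)| = 1 := by
        have hnn := abs_nonneg (((jj:ℕ):ℤ) - (((1:ℕ)):ℤ))
        rcases abs_choice (((jj:ℕ):ℤ) - (((1:ℕ)):ℤ)) with h | h <;> omega
      rw [e0, e1]
      push_cast
      ring
    · rw [if_neg hjj]
      have hv : (jj:ℕ) ≠ 0 := fun h => hjj (Fin.ext h)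
      have key : |((jj:ℕ):ℤ) - (((0:ℕ)):ℤ)| = |((jj:ℕ):ℤ) - (((1:ℕ)):ℤ)| + 1 := by
        have hnn0 := abs_nonneg (((jj:ℕ):ℤ) - (((0:ℕ)):ℤ))
        have hnn1 := abs_nonneg (((jj:ℕ):ℤ) - (((1:ℕ)):ℤ))
        rcases abs_choice (((jj:ℕ):ℤ) - (((0:ℕ)):ℤ)) with h | h <;>
          rcases abs_choice (((jj:ℕ):ℤ) - (((1:ℕ)):ℤ)) with h' | h' <;> omega
      have keyq : ((|((jj:ℕ):ℤ) - (((0:ℕ)):ℤ)| : ℤ) : ℚ)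
          = ((|((jj:ℕ):ℤ) - (((1:ℕ)):ℤ)| : ℤ) : ℚ) + 1 := by exact_mod_cast key
      have : (((2:ℤ):ℚ) * ((1:ℚ)/4 * ((n:ℚ) - 2*((|((jj:ℕ):ℤ) - (((0:ℕ)):ℤ)| : ℤ):ℚ)))
        + ((-1:ℤ):ℚ) * ((1:ℚ)/4 * ((n:ℚ) - 2*((|((jj:ℕ):ℤ) - (((1:ℕ)):ℤ)| : ℤ):ℚ)))
        + ((-1:ℤ):ℚ) * ((1:ℚ)/4 * ((n:ℚ) - 2*((|((jj:ℕ):ℤ) - (((1:ℕ)):ℤ)| : ℤ):ℚ)))) = -1 := by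
        push_cast at keyq ⊢
        linarith
      rw [this]
  obtain ⟨k2, hk2⟩ := H2
  have e2sum : ∑ jj : Fin n, (if jj = f0 then (1:ℚ) else (-1)) * z i₀ jj
      = z i₀ f0 - z i₀ L - ∑ jj ∈ T, z i₀ jj := by
    rw [hsplit (fun jj => (if jj = f0 then (1:ℚ) else (-1)) * z i₀ jj)]
    rw [if_pos rfl, if_neg (Ne.symm hf0L)]
    have : ∑ jj ∈ T, (if jj = f0 then (1:ℚ) else (-1)) * z i₀ jj = - ∑ jj ∈ T, z i₀ jj := by
      rw [← Finset.sum_neg_distrib]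
      refine Finset.sum_congr rfl fun jj hjj => ?_
      rw [hT, Finset.mem_filter] at hjj
      rw [if_neg (fun h => hjj.2 (Or.inl h))]
      ring
    rw [this]
    ring
  have hP : Iq (z i₀ f0 - z i₀ L - ∑ jj ∈ T, z i₀ jj) :=
    ⟨k2, hk2.trans ((Finset.sum_congr rfl fun jj _ => hterm2 jj).trans e2sum)⟩
  have hd : Iq (z i₀ f0 - z i₀ L) := by
    have := Iq_add hP hS
    rwa [show (z i₀ f0 - z i₀ L - ∑ jj ∈ T, z i₀ jj) + ∑ jj ∈ T, z i₀ jj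
      = z i₀ f0 - z i₀ L by ring] at this
  -- second endpoint relation
  have H3 := tv_extract n m Cs h0 z hz i₀ 0 1 1 h0n h1n h1n 2 0 0 (by decide) (by decide)
  have hterm3 : ∀ jj : Fin n,
      (((2:ℤ):ℚ) * ((1:ℚ)/4 * ((n:ℚ) - 2*((|((jj:ℕ):ℤ) - (((0:ℕ)):ℤ)| : ℤ):ℚ)))
        + ((0:ℤ):ℚ) * ((1:ℚ)/4 * ((n:ℚ) - 2*((|((jj:ℕ):ℤ) - (((1:ℕ)):ℤ)| : ℤ):ℚ)))
        + ((0:ℤ):ℚ) * ((1:ℚ)/4 * ((n:ℚ) - 2*((|((jj:ℕ):ℤ) - (((1:ℕ)):ℤ)| : ℤ):ℚ)))) * z i₀ jj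
      = ((((2 * q : ℕ):ℤ) - ((jj:ℕ):ℤ) : ℤ) : ℚ) * z i₀ jj := by
    intro jj
    have e0 : |((jj:ℕ):ℤ) - (((0:ℕ)):ℤ)| = ((jj:ℕ):ℤ) := by
      have hnn := abs_nonneg (((jj:ℕ):ℤ) - (((0:ℕ)):ℤ))
      rcases abs_choice (((jj:ℕ):ℤ) - (((0:ℕ)):ℤ)) with h | h <;> omega
    rw [e0]
    have : ((2:ℤ):ℚ) * ((1:ℚ)/4 * ((n:ℚ) - 2*((((jj:ℕ):ℤ) : ℤ):ℚ)))
        + ((0:ℤ):ℚ) * ((1:ℚ)/4 * ((n:ℚ) - 2*((|((jj:ℕ):ℤ) - (((1:ℕ)):ℤ)| : ℤ):ℚ)))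
        + ((0:ℤ):ℚ) * ((1:ℚ)/4 * ((n:ℚ) - 2*((|((jj:ℕ):ℤ) - (((1:ℕ)):ℤ)| : ℤ):ℚ)))
        = ((((2 * q : ℕ):ℤ) - ((jj:ℕ):ℤ) : ℤ) : ℚ) := by
      push_cast
      linarith [hcast]
    rw [this]
  obtain ⟨k3, hk3⟩ := H3
  have e3sum : ∑ jj : Fin n, ((((2 * q : ℕ):ℤ) - ((jj:ℕ):ℤ) : ℤ) : ℚ) * z i₀ jj
      = ((((2 * q : ℕ):ℤ) - ((f0:ℕ):ℤ) : ℤ) : ℚ) * z i₀ f0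
        + ((((2 * q : ℕ):ℤ) - ((L:ℕ):ℤ) : ℤ) : ℚ) * z i₀ L
        + ∑ jj ∈ T, ((((2 * q : ℕ):ℤ) - ((jj:ℕ):ℤ) : ℤ) : ℚ) * z i₀ jj :=
    hsplit (fun jj => ((((2 * q : ℕ):ℤ) - ((jj:ℕ):ℤ) : ℤ) : ℚ) * z i₀ jj)
  have hTQ : Iq (∑ jj ∈ T, ((((2 * q : ℕ):ℤ) - ((jj:ℕ):ℤ) : ℤ) : ℚ) * z i₀ jj) :=
    Iq_sum fun jj hjj => Iq_zmul _ (hInt jj (hTmem jj hjj).1 (hTmem jj hjj).2)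
  have hQ : Iq (((((2 * q : ℕ):ℤ) - ((f0:ℕ):ℤ) : ℤ) : ℚ) * z i₀ f0
      + ((((2 * q : ℕ):ℤ) - ((L:ℕ):ℤ) : ℤ) : ℚ) * z i₀ L) := by
    have h3' : Iq (∑ jj : Fin n, ((((2 * q : ℕ):ℤ) - ((jj:ℕ):ℤ) : ℤ) : ℚ) * z i₀ jj) :=
      ⟨k3, hk3.trans (Finset.sum_congr rfl fun jj _ => hterm3 jj)⟩
    have := Iq_sub h3' hTQ
    rw [e3sum] at this
    rwa [show (((((2 * q : ℕ):ℤ) - ((f0:ℕ):ℤ) : ℤ) : ℚ) * z i₀ f0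
        + ((((2 * q : ℕ):ℤ) - ((L:ℕ):ℤ) : ℤ) : ℚ) * z i₀ L
        + ∑ jj ∈ T, ((((2 * q : ℕ):ℤ) - ((jj:ℕ):ℤ) : ℤ) : ℚ) * z i₀ jj)
        - ∑ jj ∈ T, ((((2 * q : ℕ):ℤ) - ((jj:ℕ):ℤ) : ℤ) : ℚ) * z i₀ jj
      = (((((2 * q : ℕ):ℤ) - ((f0:ℕ):ℤ) : ℤ) : ℚ) * z i₀ f0
        + ((((2 * q : ℕ):ℤ) - ((L:ℕ):ℤ) : ℤ) : ℚ) * z i₀ L) by ring] at this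
  have hzL : Iq (z i₀ L) := by
    have hmul : Iq ((((2 * q : ℕ):ℤ):ℚ) * (z i₀ f0 - z i₀ L)) := Iq_zmul _ hd
    have := Iq_sub hQ hmul
    have hv0 : ((f0:ℕ):ℤ) = 0 := by rw [hf0]; rfl
    have hvL : ((L:ℕ):ℤ) = (n:ℤ) - 1 := by
      rw [hL]
      show ((n - 1 : ℕ) : ℤ) = (n:ℤ) - 1
      omega
    rwa [show (((((2 * q : ℕ):ℤ) - ((f0:ℕ):ℤ) : ℤ) : ℚ) * z i₀ f0
        + ((((2 * q : ℕ):ℤ) - ((L:ℕ):ℤ) : ℤ) : ℚ) * z i₀ L)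
        - (((2 * q : ℕ):ℤ):ℚ) * (z i₀ f0 - z i₀ L) = z i₀ L by
      rw [hv0, hvL]
      push_cast
      linear_combination (- z i₀ L) * hcast] at this
  have hzf0 : Iq (z i₀ f0) := by
    have := Iq_add hd hzL
    rwa [show (z i₀ f0 - z i₀ L) + z i₀ L = z i₀ f0 by ring] at this
  by_cases hj0 : (j:ℕ) = 0
  · rwa [show j = f0 from Fin.ext hj0]
  · by_cases hjl : (j:ℕ) = n - 1
    · rwa [show j = L from Fin.ext hjl]
    · exact hInt j hj0 hjl
lemma toQD_inj (n m : ℕ) {x y : Fin m → Fin n → ℤ} (h : toQD n m x = toQD n m y) : x = y := by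
  funext i j
  have := congrFun (congrFun h i) j
  rw [toQD, toQD] at this
  exact_mod_cast this

theorem stmt16 (n m : ℕ) (hn : 4 ≤ n) (hn4 : 4 ∣ n) (hn8 : ¬ (8 ∣ n))
    (hm : 0 < m) (C : Submodule S22 (Fin m → S22)) :
    (IsIntegralS n m (C : Set _) ↔
        (C : Set _) ⊆ dualCodeS m (conjS m '' (C : Set _))) ∧
    (IsUnimodularS n m (C : Set _) ↔ IsHermitianSelfDualS m (C : Set _)) ∧
    (IsEvenLatS n m (C : Set _) ↔ ∀ w ∈ C, 2 ∣ wtHS m w) ∧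
    ((IsEvenLatS n m (C : Set _) ∧ IsUnimodularS n m (C : Set _)) ↔
        IsTypeIVS m (C : Set _)) := by
  have hn2 : 2 ≤ n := by omega
  have hn84 : n % 8 = 4 := by omega
  have hmemG : ∀ x : Fin m → Fin n → ℤ, x ∈ GammaS n m (C : Set _) ↔ rhoS n m x ∈ C :=
    fun x => Iff.rfl
  have part1 : IsIntegralS n m (C : Set _) ↔
      (C : Set _) ⊆ dualCodeS m (conjS m '' (C : Set _)) := by
    constructor
    · intro hI w hw
      rw [mem_dual_iff_bsum m C w]
      intro v hv
      obtain ⟨x, hx⟩ := rho_surj n m hn2 w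
      obtain ⟨y, hy⟩ := rho_surj n m hn2 v
      have hxg : x ∈ GammaS n m (C : Set _) := by rw [hmemG, hx]; exact hw
      have hyg : y ∈ GammaS n m (C : Set _) := by rw [hmemG, hy]; exact hv
      have hb := (Iq_BDev_iff n m hn4 x y).mp (hI x hxg y hyg)
      rwa [hx, hy] at hb
    · intro hsub x hx y hy
      exact (Iq_BDev_iff n m hn4 x y).mpr
        ((mem_dual_iff_bsum m C (rhoS n m x)).mp (hsub hx) (rhoS n m y) hy)
  have part3 : IsEvenLatS n m (C : Set _) ↔ ∀ w ∈ C, 2 ∣ wtHS m w := by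
    constructor
    · intro ⟨hI, hE⟩ w hw
      obtain ⟨x, hx⟩ := rho_surj n m hn2 w
      have hxg : x ∈ GammaS n m (C : Set _) := by rw [hmemG, hx]; exact hw
      have := (even_BDev_iff n m hn84 x).mp (hE x hxg)
      rw [hx] at this
      exact (qsum_wt m w).mp this
    · intro hwt
      have hq0 : ∀ w ∈ C, qsumS m w = 0 := fun w hw => (qsum_wt m w).mpr (hwt w hw)
      have hb0 : ∀ w ∈ C, ∀ v ∈ C, bsumS m w v = 0 := by
        intro w hw v hv
        rw [bsum_qsum, hq0 _ (C.add_mem hw hv), hq0 _ hw, hq0 _ hv]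
        ring
      exact ⟨fun x hx y hy => (Iq_BDev_iff n m hn4 x y).mpr (hb0 _ hx _ hy),
        fun x hx => (even_BDev_iff n m hn84 x).mpr (hq0 _ hx)⟩
  have part2 : IsUnimodularS n m (C : Set _) ↔ IsHermitianSelfDualS m (C : Set _) := by
    constructor
    · intro hU
      rw [IsHermitianSelfDualS]
      apply Set.Subset.antisymm
      · intro w hw
        rw [mem_dual_iff_bsum m C w]
        intro v hv
        obtain ⟨x, hx⟩ := rho_surj n m hn2 w
        obtain ⟨y, hy⟩ := rho_surj n m hn2 v
        have hxg : x ∈ GammaS n m (C : Set _) := by rw [hmemG, hx]; exact hw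
        have hyg : y ∈ GammaS n m (C : Set _) := by rw [hmemG, hy]; exact hv
        have hxd : toQD n m x ∈ dualLatticeS n m (C : Set _) := by
          rw [IsUnimodularS] at hU
          rw [hU]
          exact ⟨x, hxg, rfl⟩
        have hb := (Iq_BDev_iff n m hn4 x y).mp (hxd y hyg)
        rwa [hx, hy] at hb
      · intro w hw
        obtain ⟨x, hx⟩ := rho_surj n m hn2 w
        have hxd : toQD n m x ∈ dualLatticeS n m (C : Set _) := by
          intro y hy
          refine (Iq_BDev_iff n m hn4 x y).mpr ?_
          rw [hx]
          exact (mem_dual_iff_bsum m C w).mp hw (rhoS n m y) hy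
        rw [IsUnimodularS] at hU
        rw [hU] at hxd
        obtain ⟨x', hx'g, hx'e⟩ := hxd
        have hxx : x' = x := toQD_inj n m hx'e
        rw [← hx, ← hxx]
        exact hx'g
    · intro hsd
      rw [IsUnimodularS]
      apply Set.Subset.antisymm
      · intro z hz
        have hIqz : ∀ i j, Iq (z i j) :=
          fun i j => dual_Iq n m hn hn4 (C : Set _) C.zero_mem z hz i j
        choose x hx using fun i => fun j => hIqz i j
        have hxz : toQD n m x = z := funext fun i => funext fun j => hx i j
        refine ⟨x, ?_, hxz⟩
        rw [hmemG]
        rw [IsHermitianSelfDualS] at hsd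
        suffices hgoal : rhoS n m x ∈ dualCodeS m (conjS m '' (C : Set _)) by
          have : rhoS n m x ∈ (C : Set _) := by rw [hsd]; exact hgoal
          exact this
        rw [mem_dual_iff_bsum m C (rhoS n m x)]
        intro v hv
        obtain ⟨y, hy⟩ := rho_surj n m hn2 v
        have hyg : y ∈ GammaS n m (C : Set _) := by rw [hmemG, hy]; exact hv
        have := hz y hyg
        rw [← hxz] at this
        have hb := (Iq_BDev_iff n m hn4 x y).mp this
        rwa [hy] at hb
      · rintro zq ⟨x, hxg, rfl⟩
        intro y hyg
        refine (Iq_BDev_iff n m hn4 x y).mpr ?_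
        have hx' : rhoS n m x ∈ C := hxg
        rw [IsHermitianSelfDualS] at hsd
        have : rhoS n m x ∈ dualCodeS m (conjS m '' (C : Set _)) := by
          rw [← hsd]; exact hx'
        exact (mem_dual_iff_bsum m C (rhoS n m x)).mp this (rhoS n m y) hyg
  refine ⟨part1, part2, part3, ?_⟩
  constructor
  · intro ⟨he, hu⟩
    exact ⟨part2.mp hu, part3.mp he⟩
  · intro ⟨hsd, hwt⟩
    exact ⟨part3.mpr hwt, part2.mpr hsd⟩
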